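/- Let P(t) = a_0 + a_1(t + t^{-1}) + ... + a_d(t^d + t^{-d}) be a palindromic Laurent polynomial with real coefficients. If the strict inequality |a_j| > |a_0|·cos(π/(⌊d/j⌋ + 2)) holds for some j ∈ {1,...,d}, then P has a zero of odd order on the complex unit circle. -/

import Mathlib

open Polynomial

/-- The polynomial `t^d · P(t)` for the palindromic real Laurent polynomial
`P(t) = a₀ + a₁(t + t⁻¹) + ⋯ + a_d(t^d + t^{-d})`, viewed over ℂ. -/
noncomputable def palPolyR (a : ℕ → ℝ) (d : ℕ) : Polynomial ℂ :=
  C (a 0 : ℂ) * X ^ d + ∑ j ∈ Finset.Icc 1 d, C (a j : ℂ) * (X ^ (d + j) + X ^ (d - j))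

namespace PalAux

open Complex Filter Topology

/-- The real function `Q(θ) = a₀ + 2∑ aⱼ cos(jθ)` with `P(e^{iθ}) = Q(θ)`. -/
noncomputable def Qf (a : ℕ → ℝ) (d : ℕ) (θ : ℝ) : ℝ :=
  a 0 + ∑ j ∈ Finset.Icc 1 d, 2 * a j * Real.cos (j * θ)

lemma Qf_cont (a : ℕ → ℝ) (d : ℕ) : Continuous (Qf a d) := by
  unfold Qf; fun_prop

lemma eval_pal (a : ℕ → ℝ) (d : ℕ) (θ : ℝ) :
    (palPolyR a d).eval (Complex.exp (θ * Complex.I)) =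
      Complex.exp ((d : ℝ) * θ * Complex.I) * (Qf a d θ : ℂ) := by
  have hexp : ∀ n : ℕ, Complex.exp (θ * I) ^ n = Complex.exp ((n : ℝ) * θ * I) := by
    intro n; rw [← Complex.exp_nat_mul]; push_cast; ring_nf
  simp only [palPolyR, eval_add, eval_mul, eval_pow, eval_C, eval_X, eval_finset_sum, hexp, Qf]
  push_cast
  rw [mul_add, Finset.mul_sum]
  congr 1
  · ring
  · apply Finset.sum_congr rfl
    intro x hx
    have hxd : x ≤ d := (Finset.mem_Icc.mp hx).2
    rw [Nat.cast_sub hxd]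
    rw [Complex.cos]
    rw [show ((d:ℂ)+x)*θ*I = d*θ*I + x*θ*I by ring,
        show ((d:ℂ)-x)*θ*I = d*θ*I + (-(x*θ)*I) by ring,
        Complex.exp_add, Complex.exp_add]
    rw [show -(↑x*↑θ:ℂ)*I = -(↑x*↑θ*I) by ring]
    ring

lemma coeff_pal (a : ℕ → ℝ) (d j : ℕ) (hj1 : 1 ≤ j) (hjd : j ≤ d) :
    (palPolyR a d).coeff (d + j) = (a j : ℂ) := by
  simp only [palPolyR, coeff_add, coeff_C_mul, coeff_X_pow, finset_sum_coeff, coeff_C_mul,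
    coeff_add]
  rw [if_neg (by omega), Finset.sum_eq_single j]
  · rw [if_pos rfl, if_neg (by omega)]; ring
  · intro i hi hne
    have hid : i ≤ d := (Finset.mem_Icc.mp hi).2
    have hi1 : 1 ≤ i := (Finset.mem_Icc.mp hi).1
    rw [if_neg (by omega), if_neg (by omega)]
    ring
  · intro h; exact absurd (Finset.mem_Icc.mpr ⟨hj1, hjd⟩) h

lemma exp_sub_exp (θ θ₀ : ℝ) :
    Complex.exp (θ * Complex.I) - Complex.exp (θ₀ * Complex.I)
      = Complex.exp (((θ + θ₀) / 2 : ℝ) * Complex.I) * (2 * Complex.I)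
          * (Real.sin ((θ - θ₀) / 2) : ℂ) := by
  rw [Complex.ofReal_sin, Complex.sin]
  push_cast
  have e1 : ((θ:ℂ) * I) = ((θ+θ₀)/2*I + (θ-θ₀)/2*I) := by ring
  have e2 : ((θ₀:ℂ) * I) = ((θ+θ₀)/2*I + (-((θ-θ₀)/2))*I) := by ring
  rw [e1, e2, Complex.exp_add, Complex.exp_add]
  linear_combination (Complex.exp (((θ:ℂ)+θ₀)/2*I) *
    (Complex.exp ((((θ:ℂ)-θ₀)/2)*I) - Complex.exp (-(((θ:ℂ)-θ₀)/2)*I))) * Complex.I_sq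

lemma re_orm (x : ℝ) (z : ℂ) : ((x:ℂ)*z).re = x * z.re := by simp [Complex.mul_re]
lemma im_orm (x : ℝ) (z : ℂ) : ((x:ℂ)*z).im = x * z.im := by simp [Complex.mul_im]

/-- If every root of `palPolyR a d` on the unit circle has even multiplicity, then
around every `θ₀` the function `Qf a d` is eventually of one sign. -/
lemma local_sign (a : ℕ → ℝ) (d : ℕ) (hp : palPolyR a d ≠ 0)
    (heven : ∀ z : ℂ, ‖z‖ = 1 → Even ((palPolyR a d).rootMultiplicity z)) (θ₀ : ℝ) :
    (∀ᶠ θ in 𝓝 θ₀, 0 ≤ Qf a d θ) ∨ (∀ᶠ θ in 𝓝 θ₀, Qf a d θ ≤ 0) := by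
  set p := palPolyR a d with hpdef
  set z₀ : ℂ := Complex.exp (θ₀ * I) with hz₀
  set m := p.rootMultiplicity z₀ with hm
  set g := p /ₘ (X - C z₀) ^ m with hgdef
  have hg0 : g.eval z₀ ≠ 0 := Polynomial.eval_divByMonic_pow_rootMultiplicity_ne_zero z₀ hp
  have hfac : (X - C z₀) ^ m * g = p := Polynomial.pow_mul_divByMonic_rootMultiplicity_eq p z₀
  have hz₀n : ‖z₀‖ = 1 := by
    rw [hz₀, Complex.norm_exp_ofReal_mul_I]
  have hmev : Even m := heven z₀ hz₀n
  set R : ℝ → ℂ := fun θ =>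
    (2 * I) ^ m * Complex.exp (((m : ℂ) * ((θ + θ₀) / 2) - d * θ) * I)
      * g.eval (Complex.exp (θ * I)) with hR
  have key : ∀ θ : ℝ, ((Qf a d θ : ℝ) : ℂ)
      = ((Real.sin ((θ - θ₀) / 2) : ℝ) : ℂ) ^ m * R θ := by
    intro θ
    have hne : Complex.exp ((d : ℝ) * θ * I) ≠ 0 := Complex.exp_ne_zero _
    apply mul_left_cancel₀ hne
    rw [← eval_pal a d θ, ← hpdef]
    conv_lhs => rw [← hfac]
    rw [eval_mul, eval_pow, eval_sub, eval_X, eval_C]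
    rw [exp_sub_exp θ θ₀, mul_pow, mul_pow, ← Complex.exp_nat_mul]
    rw [hR]
    simp only []
    rw [show Complex.exp ((d:ℝ)*θ*I) * (((Real.sin ((θ-θ₀)/2):ℝ):ℂ)^m *
        ((2*I)^m * Complex.exp (((m:ℂ)*((θ+θ₀)/2) - d*θ)*I) * g.eval (Complex.exp (θ*I))))
      = (Complex.exp ((d:ℝ)*θ*I) * Complex.exp (((m:ℂ)*((θ+θ₀)/2) - d*θ)*I)) *
        (2*I)^m * (((Real.sin ((θ-θ₀)/2):ℝ):ℂ)^m) * g.eval (Complex.exp (θ*I)) from by ring]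
    rw [← Complex.exp_add]
    congr 2
    push_cast
    ring_nf
  have hRcont : Continuous R := by
    apply Continuous.mul
    apply Continuous.mul
    · exact continuous_const
    · exact Complex.continuous_exp.comp (by fun_prop)
    · exact g.continuous.comp (Complex.continuous_exp.comp (by fun_prop))
  have hre : ∀ θ : ℝ, Qf a d θ = (Real.sin ((θ - θ₀) / 2)) ^ m * (R θ).re := by
    intro θ
    have := congrArg Complex.re (key θ)
    rw [Complex.ofReal_re] at this
    rw [this, ← Complex.ofReal_pow, re_orm]
  have him : ∀ θ : ℝ, θ ≠ θ₀ → |θ - θ₀| < Real.pi → (R θ).im = 0 := by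
    intro θ hθ hlt
    have hs : Real.sin ((θ - θ₀) / 2) ≠ 0 := by
      rw [Ne, Real.sin_eq_zero_iff_of_lt_of_lt (by cases abs_lt.mp hlt; linarith)
        (by cases abs_lt.mp hlt; linarith)]
      intro h
      apply hθ
      have : θ - θ₀ = 0 := by linarith
      linarith
    have := congrArg Complex.im (key θ)
    rw [Complex.ofReal_im, ← Complex.ofReal_pow, im_orm] at this
    have hsm : Real.sin ((θ - θ₀) / 2) ^ m ≠ 0 := pow_ne_zero _ hs
    rcases mul_eq_zero.mp this.symm with h | h
    · exact absurd h hsm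
    · exact h
  have hRim0 : (R θ₀).im = 0 := by
    have h1 : Tendsto (fun θ => (R θ).im) (𝓝[≠] θ₀) (𝓝 ((R θ₀).im)) :=
      ((Complex.continuous_im.comp hRcont).tendsto θ₀).mono_left nhdsWithin_le_nhds
    have h2 : (fun θ => (R θ).im) =ᶠ[𝓝[≠] θ₀] fun _ => 0 := by
      have hball : ∀ᶠ θ in 𝓝 θ₀, |θ - θ₀| < Real.pi := by
        have hco : Continuous fun θ : ℝ => |θ - θ₀| := by fun_prop
        exact (hco.tendsto θ₀).eventually_lt_const (by simpa using Real.pi_pos)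
      filter_upwards [eventually_nhdsWithin_of_eventually_nhds hball,
        self_mem_nhdsWithin] with θ hb1 hb2
      exact him θ hb2 hb1
    have h3 : Tendsto (fun θ => (R θ).im) (𝓝[≠] θ₀) (𝓝 0) := by
      rw [tendsto_congr' h2]; exact tendsto_const_nhds
    exact tendsto_nhds_unique h1 h3
  have hR0 : R θ₀ ≠ 0 := by
    rw [hR]
    simp only []
    apply mul_ne_zero (mul_ne_zero _ (Complex.exp_ne_zero _)) hg0
    apply pow_ne_zero
    simp [Complex.ext_iff]
  have hRre : (R θ₀).re ≠ 0 := by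
    intro h
    exact hR0 (Complex.ext h (by simpa using hRim0))
  have hsmnn : ∀ θ : ℝ, 0 ≤ Real.sin ((θ - θ₀) / 2) ^ m := fun θ => hmev.pow_nonneg _
  rcases hRre.lt_or_gt with hneg | hpos
  · right
    have hev : ∀ᶠ θ in 𝓝 θ₀, (R θ).re < 0 :=
      ContinuousAt.eventually_lt (Complex.continuous_re.comp hRcont).continuousAt
        continuousAt_const hneg
    filter_upwards [hev] with θ hθ
    rw [hre θ]
    exact mul_nonpos_of_nonneg_of_nonpos (hsmnn θ) hθ.le
  · left
    have hev : ∀ᶠ θ in 𝓝 θ₀, 0 < (R θ).re :=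
      ContinuousAt.eventually_lt continuousAt_const
        (Complex.continuous_re.comp hRcont).continuousAt hpos
    filter_upwards [hev] with θ hθ
    rw [hre θ]
    exact mul_nonneg (hsmnn θ) hθ.le

end PalAux

/-- Assuming the Konvalina–Matache theorem (a palindromic real Laurent polynomial with
`|b_i| ≥ |b₀|·cos(π/(⌊e/i⌋+2))` for some `1 ≤ i ≤ e` has a zero on the unit circle):
if the strict inequality `|a_j| > |a₀|·cos(π/(⌊d/j⌋+2))` holds for some `1 ≤ j ≤ d`,
then `P` has a zero of odd order on the complex unit circle. -/
theorem stmt_1 (a : ℕ → ℝ) (d j : ℕ) (hj1 : 1 ≤ j) (hjd : j ≤ d)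
    (hKM : ∀ (b : ℕ → ℝ) (e i : ℕ), 1 ≤ i → i ≤ e →
      |b i| ≥ |b 0| * Real.cos (Real.pi / ((e / i : ℕ) + 2)) →
      ∃ z : ℂ, ‖z‖ = 1 ∧ (palPolyR b e).IsRoot z)
    (hineq : |a j| > |a 0| * Real.cos (Real.pi / ((d / j : ℕ) + 2))) :
    ∃ z : ℂ, ‖z‖ = 1 ∧ Odd ((palPolyR a d).rootMultiplicity z) := by
  classical
  open PalAux Complex Filter Topology in
  set c := Real.cos (Real.pi / ((d / j : ℕ) + 2)) with hc
  have hc1 : c ≤ 1 := Real.cos_le_one _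
  have hcnn : 0 ≤ c := by
    apply Real.cos_nonneg_of_mem_Icc
    have hpos : (0:ℝ) < (d / j : ℕ) + 2 := by positivity
    constructor
    · have h0 : (0:ℝ) ≤ Real.pi / ((d / j : ℕ) + 2) := by positivity
      linarith [Real.pi_pos]
    · apply div_le_div_of_nonneg_left Real.pi_pos.le (by norm_num)
      linarith [Nat.cast_nonneg (d / j) (α := ℝ)]
  have haj : a j ≠ 0 := by
    intro h
    rw [h, abs_zero] at hineq
    nlinarith [abs_nonneg (a 0)]
  have hp0 : palPolyR a d ≠ 0 := by
    intro h
    apply haj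
    have := PalAux.coeff_pal a d j hj1 hjd
    rw [h, Polynomial.coeff_zero] at this
    exact_mod_cast this.symm
  by_contra hcon
  push_neg at hcon
  have heven : ∀ z : ℂ, ‖z‖ = 1 → Even ((palPolyR a d).rootMultiplicity z) := fun z hz =>
    Nat.not_odd_iff_even.mp (hcon z hz)
  set δ := |a j| - |a 0| * c with hδ
  have hδpos : 0 < δ := sub_pos.mpr hineq
  -- perturbation: for any |s| ≤ δ, Qf a d takes the value -s somewhere
  have hb : ∀ s : ℝ, |s| ≤ δ → ∃ θ : ℝ, PalAux.Qf a d θ = -s := by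
    intro s hs
    set b : ℕ → ℝ := fun n => if n = 0 then a 0 + s else a n with hbdef
    have hKMb := hKM b d j hj1 hjd
    have hb0 : b 0 = a 0 + s := by simp [hbdef]
    have hbj : ∀ i : ℕ, 1 ≤ i → b i = a i := by
      intro i hi; simp [hbdef, Nat.one_le_iff_ne_zero.mp hi]
    have hineqb : |b j| ≥ |b 0| * c := by
      rw [hbj j hj1, hb0]
      have h1 : |a 0 + s| ≤ |a 0| + δ := by
        calc |a 0 + s| ≤ |a 0| + |s| := abs_add_le _ _
        _ ≤ |a 0| + δ := by linarith
      nlinarith [abs_nonneg (a 0 + s)]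
    obtain ⟨z, hz1, hzr⟩ := hKMb hineqb
    have habs : (‖z‖ : ℝ) = 1 := by exact hz1
    have hzexp : z = Complex.exp ((z.arg : ℝ) * Complex.I) := by
      conv_lhs => rw [← Complex.norm_mul_exp_arg_mul_I z]
      rw [habs]; norm_num
    refine ⟨z.arg, ?_⟩
    have hev := PalAux.eval_pal b d z.arg
    rw [← hzexp] at hev
    rw [Polynomial.IsRoot] at hzr
    rw [hzr] at hev
    have hQb : PalAux.Qf b d z.arg = 0 := by
      have := (mul_eq_zero.mp hev.symm).resolve_left (Complex.exp_ne_zero _)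
      exact_mod_cast this
    have hQrel : PalAux.Qf b d z.arg = PalAux.Qf a d z.arg + s := by
      unfold PalAux.Qf
      rw [hb0]
      have : ∀ i ∈ Finset.Icc 1 d, 2 * b i * Real.cos (i * z.arg)
          = 2 * a i * Real.cos (i * z.arg) := by
        intro i hi
        rw [hbj i (Finset.mem_Icc.mp hi).1]
      rw [Finset.sum_congr rfl this]
      ring
    linarith [hQrel ▸ hQb]
  obtain ⟨θ₁, hθ₁⟩ := hb δ (by rw [abs_of_pos hδpos])
  obtain ⟨θ₂, hθ₂⟩ := hb (-δ) (by rw [abs_neg, abs_of_pos hδpos])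
  rw [neg_neg] at hθ₂
  -- connectedness argument
  set A := interior {θ : ℝ | 0 ≤ PalAux.Qf a d θ} with hA
  set B := interior {θ : ℝ | PalAux.Qf a d θ ≤ 0} with hB
  have hcover : ∀ θ : ℝ, θ ∈ A ∪ B := by
    intro θ
    rcases PalAux.local_sign a d hp0 heven θ with h | h
    · left; rw [hA, mem_interior_iff_mem_nhds]; exact h
    · right; rw [hB, mem_interior_iff_mem_nhds]; exact h
  have hθ₂A : θ₂ ∈ A := by
    rw [hA, mem_interior_iff_mem_nhds]
    have : ∀ᶠ θ in 𝓝 θ₂, 0 < PalAux.Qf a d θ :=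
      ContinuousAt.eventually_lt continuousAt_const (PalAux.Qf_cont a d).continuousAt
        (by rw [hθ₂]; exact hδpos)
    filter_upwards [this] with θ hθ using hθ.le
  have hθ₁B : θ₁ ∈ B := by
    rw [hB, mem_interior_iff_mem_nhds]
    have : ∀ᶠ θ in 𝓝 θ₁, PalAux.Qf a d θ < 0 :=
      ContinuousAt.eventually_lt (PalAux.Qf_cont a d).continuousAt continuousAt_const
        (by rw [hθ₁]; linarith)
    filter_upwards [this] with θ hθ using hθ.le
  have hconn := isPreconnected_univ (α := ℝ) A B isOpen_interior isOpen_interior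
    (fun θ _ => hcover θ) ⟨θ₂, Set.mem_univ _, hθ₂A⟩ ⟨θ₁, Set.mem_univ _, hθ₁B⟩
  obtain ⟨θ, -, hθA, hθB⟩ := hconn
  -- Q vanishes on a neighbourhood of θ, contradicting finiteness of roots
  have hz : ∀ᶠ s in 𝓝 θ, PalAux.Qf a d s = 0 := by
    have h1 : ∀ᶠ s in 𝓝 θ, 0 ≤ PalAux.Qf a d s := mem_interior_iff_mem_nhds.mp hθA
    have h2 : ∀ᶠ s in 𝓝 θ, PalAux.Qf a d s ≤ 0 := mem_interior_iff_mem_nhds.mp hθB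
    filter_upwards [h1, h2] with s hs1 hs2 using le_antisymm hs2 hs1
  obtain ⟨ε, hεpos, hε⟩ := Metric.eventually_nhds_iff.mp hz
  set r := min ε 1 with hr
  have hrpos : 0 < r := lt_min hεpos one_pos
  have hroots : ∀ s ∈ Set.Ioo (θ - r) (θ + r), (palPolyR a d).IsRoot (Complex.exp (s * Complex.I)) := by
    intro s hs
    have hd : dist s θ < ε := by
      rw [Real.dist_eq, abs_lt]
      cases' hs with h1 h2
      constructor <;> [skip; skip] <;>
        · have := min_le_left ε (1:ℝ); simp only [hr] at h1 h2; linarith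
    have hQ := hε hd
    rw [Polynomial.IsRoot, PalAux.eval_pal a d s, hQ]
    simp
  have hinj : Set.InjOn (fun s : ℝ => Complex.exp (s * Complex.I)) (Set.Ioo (θ - r) (θ + r)) := by
    intro s hs t ht hst
    obtain ⟨n, hn⟩ := Complex.exp_eq_exp_iff_exists_int.mp hst
    have hnr : (s : ℂ) - t = n * (2 * Real.pi) := by
      have h2 : ((s:ℂ) - t) * Complex.I = (n * (2 * Real.pi)) * Complex.I := by
        rw [sub_mul, hn]; ring
      exact mul_right_cancel₀ Complex.I_ne_zero h2
    have hsr : s - t = n * (2 * Real.pi) := by exact_mod_cast hnr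
    have hbound : |s - t| < 2 * Real.pi := by
      rw [abs_lt]
      cases' hs with hs1 hs2
      cases' ht with ht1 ht2
      have hr1 : r ≤ 1 := min_le_right _ _
      have := Real.pi_gt_three
      constructor <;> nlinarith
    have hn0 : n = 0 := by
      by_contra hn0
      have h1 : (1 : ℝ) ≤ |(n : ℝ)| := by
        rw [← Int.cast_abs]
        exact_mod_cast Int.one_le_abs (by omega)
      rw [hsr, abs_mul] at hbound
      have h2 : |2 * Real.pi| = 2 * Real.pi := abs_of_pos (by positivity)
      rw [h2] at hbound
      nlinarith [Real.pi_pos]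
    rw [hn0] at hsr
    push_cast at hsr
    linarith
  have hfin : {z : ℂ | (palPolyR a d).IsRoot z}.Finite := Polynomial.finite_setOf_isRoot hp0
  have himg : ((fun s : ℝ => Complex.exp (s * Complex.I)) '' Set.Ioo (θ - r) (θ + r)).Finite :=
    hfin.subset (by rintro z ⟨s, hs, rfl⟩; exact hroots s hs)
  have : (Set.Ioo (θ - r) (θ + r)).Finite := (himg.of_finite_image hinj)
  exact (Set.Ioo_infinite (by linarith)) this
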